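/- arXiv:1204.3417 — 5 statements merged into one kernel-verified Lean document; each statement's English description precedes it below -/
import Mathlib

section
/- Let E be a normed space over a non-Archimedean valued field whose norm satisfies the ultrametric inequality, and let W be a subspace of E that is spherically complete (as a metric space). Then for every v ∈ E, the distance from v to W is attained: there exists w₀ ∈ W with ‖v - w₀‖ = inf_{w ∈ W} ‖v - w‖. -/
/-- A metric space is spherically complete if every nonempty chain of closed
balls has nonempty intersection. -/
def SphericallyComplete (X : Type*) [MetricSpace X] : Prop :=
  ∀ (ι : Type) (_ : Nonempty ι) (c : ι → X) (r : ι → ℝ), (∀ i, 0 ≤ r i) →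
    (∀ i j, Metric.closedBall (c i) (r i) ⊆ Metric.closedBall (c j) (r j) ∨
      Metric.closedBall (c j) (r j) ⊆ Metric.closedBall (c i) (r i)) →
    (⋂ i, Metric.closedBall (c i) (r i)).Nonempty

/-- If `W` is a spherically complete subspace of an ultrametric
normed space `E`, then for every `v ∈ E` the distance from `v` to `W` is
attained. -/
theorem dist_to_spherically_complete_subspace_attained
    {k : Type*} [NormedField k] [IsUltrametricDist k]
    {E : Type*} [NormedAddCommGroup E] [NormedSpace k E] [IsUltrametricDist E]
    (W : Submodule k E) (hW : SphericallyComplete W)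
    (v : E) :
    ∃ w₀ ∈ W, ‖v - w₀‖ = ⨅ w : W, ‖v - (w : E)‖ := by
  set f : W → ℝ := fun w => ‖v - (w : E)‖ with hf
  -- key: balls B(w, f w) are pairwise comparable
  have key : ∀ w₁ w₂ : W, f w₁ ≤ f w₂ →
      Metric.closedBall w₁ (f w₁) ⊆ Metric.closedBall w₂ (f w₂) := by
    intro w₁ w₂ hle x hx
    simp only [Metric.mem_closedBall] at hx ⊢
    have hd : dist w₁ w₂ ≤ f w₂ := by
      have : dist (w₁ : E) (w₂ : E) ≤ max ‖v - w₁‖ ‖v - w₂‖ := by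
        rw [dist_eq_norm]
        calc ‖(w₁ : E) - w₂‖ = ‖(v - w₂) + (-(v - w₁))‖ := by abel_nf
          _ ≤ max ‖v - w₂‖ ‖-(v - w₁)‖ := IsUltrametricDist.norm_add_le_max _ _
          _ = max ‖v - w₁‖ ‖v - w₂‖ := by rw [norm_neg, max_comm]
      calc dist w₁ w₂ = dist (w₁ : E) (w₂ : E) := rfl
        _ ≤ max ‖v - w₁‖ ‖v - w₂‖ := this
        _ = f w₂ := max_eq_right hle
    calc dist x w₂ ≤ max (dist x w₁) (dist w₁ w₂) := IsUltrametricDist.dist_triangle_max x w₁ w₂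
      _ ≤ f w₂ := max_le (le_trans hx hle) hd
  -- index type in `Type 0`
  let ι : Type := {r : ℝ // ∃ w : W, f w = r}
  have hι : Nonempty ι := ⟨⟨f ⟨0, W.zero_mem⟩, ⟨_, rfl⟩⟩⟩
  let c : ι → W := fun i => i.2.choose
  have hc : ∀ i : ι, f (c i) = i.1 := fun i => i.2.choose_spec
  have hr0 : ∀ i : ι, (0 : ℝ) ≤ i.1 := by
    intro i; rw [← hc i]; exact norm_nonneg _
  have hchain : ∀ i j : ι, Metric.closedBall (c i) i.1 ⊆ Metric.closedBall (c j) j.1 ∨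
      Metric.closedBall (c j) j.1 ⊆ Metric.closedBall (c i) i.1 := by
    intro i j
    rcases le_total (f (c i)) (f (c j)) with h | h
    · left; rw [← hc i, ← hc j]; exact key _ _ h
    · right; rw [← hc i, ← hc j]; exact key _ _ h
  obtain ⟨w₀, hw₀⟩ := hW ι hι c (fun i => i.1) hr0 hchain
  simp only [Set.mem_iInter, Metric.mem_closedBall] at hw₀
  refine ⟨w₀, w₀.2, ?_⟩
  have hlb : ∀ w : W, ‖v - (w₀ : E)‖ ≤ ‖v - (w : E)‖ := by
    intro w
    have h1 : dist w₀ (c ⟨f w, ⟨w, rfl⟩⟩) ≤ f w := hw₀ ⟨f w, ⟨w, rfl⟩⟩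
    set w' := c ⟨f w, ⟨w, rfl⟩⟩ with hw'
    have h2 : f w' = f w := hc ⟨f w, ⟨w, rfl⟩⟩
    calc ‖v - (w₀ : E)‖ = ‖(v - w') + (w' - w₀ : E)‖ := by rw [sub_add_sub_cancel]
      _ ≤ max ‖v - (w' : E)‖ ‖(w' - w₀ : E)‖ := IsUltrametricDist.norm_add_le_max _ _
      _ ≤ f w := by
        apply max_le
        · exact le_of_eq h2
        · have : ‖(w' - w₀ : E)‖ = dist w₀ w' := by
            rw [dist_comm, Subtype.dist_eq, dist_eq_norm]
          rw [this]; exact h1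
  refine le_antisymm ?_ ?_
  · exact le_ciInf hlb
  · exact ciInf_le ⟨0, fun x ⟨w, hw⟩ => hw ▸ norm_nonneg _⟩ w₀
end

section
/- Let k be a spherically complete non-Archimedean valued field. Then every finite-dimensional normed vector space over k (with a norm satisfying the ultrametric inequality and ‖c·x‖ = |c|·‖x‖) is spherically complete. -/
open Metric Module IsUltrametricDist

lemma ultra_ball_sub {X : Type*} [MetricSpace X] [IsUltrametricDist X]
    {x y : X} {r r' : ℝ} (h : dist x y ≤ r') (hr : r ≤ r') :
    closedBall x r ⊆ closedBall y r' := fun z hz => by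
  rw [mem_closedBall] at *
  exact (_root_.dist_triangle_max z x y).trans (max_le (hz.trans hr) h)

section

variable {k : Type*} [NormedField k] [IsUltrametricDist k]
variable {E : Type*} [NormedAddCommGroup E] [NormedSpace k E] [IsUltrametricDist E]

lemma norm_le_of_add {a b : E} : ‖a‖ ≤ max ‖a + b‖ ‖b‖ := by
  have := norm_add_le_max (a + b) (-b)
  simpa using this

/-- distance to a spherically complete submodule is attained -/
lemma exists_norm_sub_min (D : Submodule k E) (hD : SphericallyComplete D) (e : E) :
    ∃ x0 ∈ D, ∀ x ∈ D, ‖e - x0‖ ≤ ‖e - x‖ := by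
  set ι : Type := {s : ℝ // ∃ x : D, ‖e - (x : E)‖ ≤ s} with hι
  have hne : Nonempty ι := ⟨⟨‖e - ((0 : D) : E)‖, ⟨0, le_rfl⟩⟩⟩
  have : ∀ s : ι, ∃ x : D, ‖e - (x : E)‖ ≤ s.1 := fun s => s.2
  choose f hf using this
  have hdist : ∀ s s' : ι, dist (f s) (f s') ≤ max s.1 s'.1 := by
    intro s s'
    rw [dist_eq_norm]
    have : ‖f s - f s'‖ = ‖((f s : E)) - (f s' : E)‖ := rfl
    rw [this]
    have h1 : (f s : E) - (f s' : E) = -(e - f s) + (e - f s') := by abel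
    rw [h1]
    exact (norm_add_le_max _ _).trans
      (max_le_max (by rw [norm_neg]; exact hf s) (hf s'))
  have key := hD ι hne f (fun s => s.1)
    (fun s => le_trans (norm_nonneg _) (hf s))
    (by
      intro s s'
      rcases le_total s.1 s'.1 with h | h
      · exact Or.inl (ultra_ball_sub ((hdist s s').trans (max_le h le_rfl)) h)
      · exact Or.inr (ultra_ball_sub ((hdist s' s).trans (max_le h le_rfl)) h))
  obtain ⟨x0, hx0⟩ := key
  simp only [Set.mem_iInter, mem_closedBall] at hx0
  refine ⟨(x0 : E), x0.2, fun x hx => ?_⟩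
  have hs : ∃ y : D, ‖e - (y : E)‖ ≤ ‖e - x‖ := ⟨⟨x, hx⟩, le_rfl⟩
  set s : ι := ⟨‖e - x‖, hs⟩
  have h1 : dist x0 (f s) ≤ ‖e - x‖ := hx0 s
  have h2 : ‖e - (f s : E)‖ ≤ ‖e - x‖ := hf s
  have h3 : e - (x0 : E) = (e - (f s : E)) + ((f s : E) - (x0 : E)) := by abel
  rw [h3]
  refine (norm_add_le_max _ _).trans (max_le h2 ?_)
  rw [dist_eq_norm] at h1
  have : ‖(f s : E) - (x0 : E)‖ = ‖f s - x0‖ := rfl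
  rw [this, ← norm_neg]
  simpa using h1

theorem aux {k : Type v} [NormedField k] [IsUltrametricDist k] (hk : SphericallyComplete k) :
    ∀ (n : ℕ) (E : Type u) [NormedAddCommGroup E] [NormedSpace k E] [IsUltrametricDist E]
      [FiniteDimensional k E], finrank k E = n → SphericallyComplete E := by
  intro n
  induction n with
  | zero =>
    intro E _ _ _ _ hn ι hne c r hr _
    have : Subsingleton E := finrank_zero_iff.mp hn
    obtain ⟨i0⟩ := hne
    exact ⟨c i0, Set.mem_iInter.mpr fun i => by
      simp [mem_closedBall, Subsingleton.elim (c i0) (c i), hr i]⟩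
  | succ n ih =>
    intro E _ _ _ _ hn ι hne c r hr hchain
    let b : Basis (Fin (n + 1)) k E := finBasisOfFinrankEq k E hn
    set D : Submodule k E := Submodule.span k (Set.range (b ∘ Fin.castSucc)) with hD
    set e : E := b (Fin.last n) with he
    have hli : LinearIndependent k (b ∘ Fin.castSucc) :=
      b.linearIndependent.comp _ (Fin.castSucc_injective n)
    have hfr : finrank k D = n := by
      rw [hD, finrank_span_eq_card hli, Fintype.card_fin]
    have hDsc : SphericallyComplete D := ih D hfr
    -- e ∉ D
    have heD : e ∉ D := by
      have hr0 : (Set.range Fin.castSucc : Set (Fin (n + 1))) = {i | i ≠ Fin.last n} := by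
        ext i
        simp only [Set.mem_range, Set.mem_setOf_eq]
        constructor
        · rintro ⟨j, rfl⟩; exact (Fin.castSucc_lt_last j).ne
        · intro h; exact ⟨i.castPred h, by simp⟩
      have hrange : Set.range (b ∘ Fin.castSucc) = b '' {i | i ≠ Fin.last n} := by
        rw [Set.range_comp, hr0]
      rw [hD, hrange]
      exact b.linearIndependent.notMem_span_image (fun h => h rfl)
    -- decomposition of any vector
    have hsup : D ⊔ Submodule.span k {e} = ⊤ := by
      rw [eq_top_iff, ← b.span_eq, Submodule.span_le]
      rintro _ ⟨i, rfl⟩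
      rcases eq_or_ne i (Fin.last n) with rfl | hi
      · exact Submodule.mem_sup_right (Submodule.mem_span_singleton_self e)
      · refine Submodule.mem_sup_left (Submodule.subset_span ?_)
        exact ⟨i.castPred hi, by simp⟩
    have hdec : ∀ x : E, ∃ d ∈ D, ∃ t : k, x = d + t • e := by
      intro x
      have hx : x ∈ D ⊔ Submodule.span k {e} := hsup ▸ Submodule.mem_top
      obtain ⟨d, hd, y, hy, rfl⟩ := Submodule.mem_sup.mp hx
      obtain ⟨t, rfl⟩ := Submodule.mem_span_singleton.mp hy
      exact ⟨d, hd, t, rfl⟩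
    -- best approximation
    obtain ⟨x0, hx0D, hx0⟩ := exists_norm_sub_min D hDsc e
    set e' : E := e - x0 with he'
    have he'pos : 0 < ‖e'‖ := by
      rw [norm_pos_iff]
      intro h
      exact heD (by rw [show e = x0 from sub_eq_zero.mp h]; exact hx0D)
    -- lower bound
    have lower : ∀ d ∈ D, ∀ t : k, ‖t • e'‖ ≤ ‖d + t • e'‖ := by
      intro d hd t
      rcases eq_or_ne t 0 with rfl | ht
      · simpa using norm_nonneg _
      · have h1 : d + t • e' = t • (t⁻¹ • d + e') := by
          rw [smul_add, smul_smul, mul_inv_cancel₀ ht, one_smul]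
        have h2 : t⁻¹ • d + e' = e - (x0 - t⁻¹ • d) := by rw [he']; abel
        have h3 : ‖t⁻¹ • d + e'‖ ≥ ‖e'‖ := by
          rw [h2, he']
          exact hx0 _ (Submodule.sub_mem D hx0D (Submodule.smul_mem D _ hd))
        rw [h1, norm_smul, norm_smul]
        exact mul_le_mul_of_nonneg_left h3 (norm_nonneg t)
    -- decompose the centers
    choose d hdD t hdt using fun i => hdec (c i)
    set d' : ι → E := fun i => d i + t i • x0 with hd'
    have hd'D : ∀ i, d' i ∈ D := fun i =>
      Submodule.add_mem D (hdD i) (Submodule.smul_mem D _ hx0D)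
    have hci : ∀ i, c i = d' i + t i • e' := by
      intro i
      rw [hdt i, hd', he', smul_sub]
      dsimp only
      abel
    have hdiff : ∀ i j, c i - c j = (d' i - d' j) + (t i - t j) • e' := by
      intro i j
      rw [hci i, hci j, sub_smul]
      abel
    -- chain bound on centers
    have hcc : ∀ i j, ‖c i - c j‖ ≤ max (r i) (r j) := by
      intro i j
      rcases hchain i j with h | h
      · have := h (mem_closedBall_self (hr i))
        rw [mem_closedBall, dist_eq_norm] at this
        exact this.trans (le_max_right _ _)
      · have := h (mem_closedBall_self (hr j))
        rw [mem_closedBall, dist_eq_norm] at this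
        rw [← norm_neg, neg_sub]
        exact this.trans (le_max_left _ _)
    have htc : ∀ i j, ‖(t i - t j) • e'‖ ≤ max (r i) (r j) := by
      intro i j
      refine le_trans ?_ (hcc i j)
      rw [hdiff i j]
      exact lower _ (Submodule.sub_mem D (hd'D i) (hd'D j)) _
    have hdc : ∀ i j, ‖d' i - d' j‖ ≤ max (r i) (r j) := by
      intro i j
      refine le_trans ?_ (hcc i j)
      rw [hdiff i j]
      calc ‖d' i - d' j‖ ≤ max ‖(d' i - d' j) + (t i - t j) • e'‖ ‖(t i - t j) • e'‖ :=
            norm_le_of_add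
        _ ≤ ‖(d' i - d' j) + (t i - t j) • e'‖ :=
            max_le le_rfl (lower _ (Submodule.sub_mem D (hd'D i) (hd'D j)) _)
    -- chain in D
    set dd : ι → D := fun i => ⟨d' i, hd'D i⟩ with hdd
    have hddist : ∀ i j, dist (dd i) (dd j) ≤ max (r i) (r j) := by
      intro i j
      rw [dist_eq_norm]
      have : ‖dd i - dd j‖ = ‖d' i - d' j‖ := rfl
      rw [this]; exact hdc i j
    obtain ⟨xD, hxD⟩ := hDsc ι hne dd r hr (by
      intro i j
      rcases le_total (r i) (r j) with h | h
      · exact Or.inl (ultra_ball_sub ((hddist i j).trans (max_le h le_rfl)) h)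
      · exact Or.inr (ultra_ball_sub ((hddist j i).trans (max_le h le_rfl)) h))
    simp only [Set.mem_iInter, mem_closedBall] at hxD
    -- chain in k
    have hrk : ∀ i, 0 ≤ r i / ‖e'‖ := fun i => div_nonneg (hr i) (norm_nonneg _)
    have htdist : ∀ i j, dist (t i) (t j) ≤ max (r i / ‖e'‖) (r j / ‖e'‖) := by
      intro i j
      rw [dist_eq_norm, max_div_div_right he'pos.le]
      rw [le_div_iff₀ he'pos]
      have := htc i j
      rwa [norm_smul] at this
    obtain ⟨τ, hτ⟩ := hk ι hne t (fun i => r i / ‖e'‖) hrk (by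
      intro i j
      rcases le_total (r i / ‖e'‖) (r j / ‖e'‖) with h | h
      · exact Or.inl (ultra_ball_sub ((htdist i j).trans (max_le h le_rfl)) h)
      · exact Or.inr (ultra_ball_sub ((htdist j i).trans (max_le h le_rfl)) h))
    simp only [Set.mem_iInter, mem_closedBall] at hτ
    -- assemble the point
    refine ⟨(xD : E) + τ • e', Set.mem_iInter.mpr fun i => ?_⟩
    rw [mem_closedBall, dist_eq_norm]
    have hxdiff : (xD : E) + τ • e' - c i = ((xD : E) - d' i) + (τ - t i) • e' := by
      rw [hci i, sub_smul]
      abel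
    rw [hxdiff]
    refine (norm_add_le_max _ _).trans (max_le ?_ ?_)
    · have := hxD i
      rw [dist_eq_norm] at this
      exact this
    · rw [norm_smul]
      have := hτ i
      rw [dist_eq_norm] at this
      calc ‖τ - t i‖ * ‖e'‖ ≤ (r i / ‖e'‖) * ‖e'‖ :=
            mul_le_mul_of_nonneg_right this (norm_nonneg _)
        _ = r i := div_mul_cancel₀ _ he'pos.ne'
end

/-- Every finite-dimensional ultrametric normed vector space over
a spherically complete non-Archimedean valued field is spherically complete. -/
theorem finiteDimensional_spherically_complete
    {k : Type*} [NormedField k] [IsUltrametricDist k]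
    (hk : SphericallyComplete k)
    (E : Type*) [NormedAddCommGroup E] [NormedSpace k E] [IsUltrametricDist E]
    [FiniteDimensional k E] :
    SphericallyComplete E :=
  aux hk (finrank k E) E rfl
end

section
/- Let k be a spherically complete non-Archimedean valued field and x a multiplicative non-Archimedean seminorm on k[T] extending |·| on k (write |P(x)| := x(P)). For every d ≥ 0 there exists a monic polynomial R₀ of degree d+1 such that |R₀(x)| = inf over all polynomials P of degree ≤ d of |(T^{d+1} - P)(x)|, i.e., the infimum of |R(x)| over monic R of degree d+1 is attained. -/
open Polynomial NNReal

/-- Chain argument: a function `G : k → ℝ≥0` which behaves like the distance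
from a point to the line through direction of "size" `s > 0` attains its
infimum over a spherically complete field. -/
lemma chain_min {k : Type*} [NormedField k] [IsUltrametricDist k]
    (hk : SphericallyComplete k) (G : k → ℝ≥0) (s : ℝ≥0) (hs : 0 < s)
    (h1 : ∀ a b : k, G b ≤ max (G a) (‖a - b‖₊ * s))
    (h2 : ∀ a b : k, ‖a - b‖₊ * s ≤ max (G a) (G b)) :
    ∃ a₀ : k, ∀ a, G a₀ ≤ G a := by
  have hs' : (0:ℝ) < s := hs
  have key : ∀ a b : k, G a ≤ G b →
      Metric.closedBall a ((G a : ℝ) / s) ⊆ Metric.closedBall b ((G b : ℝ) / s) := by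
    intro a b hab
    intro c hc
    rw [Metric.mem_closedBall] at hc ⊢
    have hdab : dist a b ≤ (G b : ℝ) / s := by
      have h2' := h2 a b
      rw [max_eq_right hab] at h2'
      have hle : (‖a - b‖₊ * s : ℝ≥0) ≤ G b := h2'
      rw [dist_eq_norm, le_div_iff₀ hs']
      exact_mod_cast hle
    calc dist c b ≤ max (dist c a) (dist a b) := IsUltrametricDist.dist_triangle_max c a b
      _ ≤ (G b : ℝ) / s := max_le (hc.trans (by gcongr)) hdab
  set m : ℝ≥0 := ⨅ a : k, G a with hm
  have hseq : ∀ i : ℕ, ∃ a : k, G a < m + ((i : ℝ≥0) + 1)⁻¹ := by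
    intro i
    have hlt : (⨅ a : k, G a) < m + ((i : ℝ≥0) + 1)⁻¹ := by
      rw [← hm]; exact lt_add_of_pos_right _ (by positivity)
    exact exists_lt_of_ciInf_lt hlt
  choose c hc using hseq
  obtain ⟨a₀, ha₀⟩ := hk ℕ ⟨0⟩ c (fun i => (G (c i) : ℝ) / s)
    (fun i => div_nonneg (G (c i)).coe_nonneg hs'.le)
    (fun i j => by
      rcases le_total (G (c i)) (G (c j)) with h | h
      · exact Or.inl (key _ _ h)
      · exact Or.inr (key _ _ h))
  refine ⟨a₀, fun a => ?_⟩
  have hGa₀ : ∀ i : ℕ, G a₀ ≤ G (c i) := by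
    intro i
    have ha : a₀ ∈ Metric.closedBall (c i) ((G (c i) : ℝ) / s) := by
      have := Set.mem_iInter.mp ha₀ i
      simpa using this
    rw [Metric.mem_closedBall] at ha
    have hnb : ‖c i - a₀‖₊ * s ≤ G (c i) := by
      have hd : ‖c i - a₀‖ ≤ (G (c i) : ℝ) / s := by
        rw [← dist_eq_norm, dist_comm]; exact ha
      rw [le_div_iff₀ hs'] at hd
      exact_mod_cast hd
    calc G a₀ ≤ max (G (c i)) (‖c i - a₀‖₊ * s) := h1 (c i) a₀
      _ = G (c i) := max_eq_left hnb
  have hGm : G a₀ ≤ m := by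
    have hreal : ∀ i : ℕ, (G a₀ : ℝ) ≤ (m : ℝ) + ((i : ℝ) + 1)⁻¹ := by
      intro i
      have := (hGa₀ i).trans (hc i).le
      have hcast : ((m + ((i : ℝ≥0) + 1)⁻¹ : ℝ≥0) : ℝ) = (m : ℝ) + ((i : ℝ) + 1)⁻¹ := by
        push_cast; ring
      calc (G a₀ : ℝ) ≤ ((m + ((i : ℝ≥0) + 1)⁻¹ : ℝ≥0) : ℝ) := by exact_mod_cast this
        _ = (m : ℝ) + ((i : ℝ) + 1)⁻¹ := hcast
    have : (G a₀ : ℝ) ≤ (m : ℝ) := by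
      refine le_of_forall_pos_le_add fun ε hε => ?_
      obtain ⟨i, hi⟩ := exists_nat_one_div_lt hε
      have h1d : ((i : ℝ) + 1)⁻¹ < ε := by
        rw [one_div] at hi; exact hi
      exact (hreal i).trans (by linarith)
    exact_mod_cast this
  exact hGm.trans (le_of_eq_of_le hm (ciInf_le (OrderBot.bddBelow _) a))

lemma exists_min_degree_lt {k : Type*} [NormedField k] [IsUltrametricDist k]
    (hk : SphericallyComplete k)
    (x : Polynomial k → ℝ≥0)
    (hmul : ∀ P Q : Polynomial k, x (P * Q) = x P * x Q)
    (hultra : ∀ P Q : Polynomial k, x (P + Q) ≤ max (x P) (x Q))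
    (hext : ∀ c : k, x (Polynomial.C c) = ‖c‖₊) :
    ∀ n : ℕ, ∀ Q : Polynomial k, ∃ P₀ : Polynomial k, P₀.degree < (n : ℕ) ∧
      ∀ P : Polynomial k, P.degree < (n : ℕ) → x (Q - P₀) ≤ x (Q - P) := by
  intro n
  induction n with
  | zero =>
    intro Q
    refine ⟨0, by simp [Nat.WithBot.lt_zero_iff], fun P hP => ?_⟩
    have : P = 0 := Polynomial.degree_eq_bot.mp (Nat.WithBot.lt_zero_iff.mp (by exact_mod_cast hP))
    simp [this]
  | succ n ih =>
    intro Q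
    choose W hWdeg hWmin using ih
    set q : Polynomial k → ℝ≥0 := fun u => x (u - W u) with hq
    have hq_le : ∀ u P : Polynomial k, P.degree < (n : ℕ) → q u ≤ x (u - P) := fun u P h =>
      hWmin u P h
    have hq_add : ∀ u v : Polynomial k, q (u + v) ≤ max (q u) (q v) := by
      intro u v
      have hdeg : (W u + W v).degree < (n : ℕ) :=
        lt_of_le_of_lt (degree_add_le _ _) (max_lt (hWdeg u) (hWdeg v))
      calc q (u + v) ≤ x ((u + v) - (W u + W v)) := hq_le _ _ hdeg
        _ = x ((u - W u) + (v - W v)) := by ring_nf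
        _ ≤ max (q u) (q v) := hultra _ _
    have hq_smul_le : ∀ (c : k) (u : Polynomial k), q (C c * u) ≤ ‖c‖₊ * q u := by
      intro c u
      have hdeg : (C c * W u).degree < (n : ℕ) := by
        refine lt_of_le_of_lt ?_ (hWdeg u)
        calc (C c * W u).degree ≤ (C c).degree + (W u).degree := degree_mul_le _ _
          _ ≤ 0 + (W u).degree := by gcongr; exact degree_C_le
          _ = (W u).degree := by simp
      calc q (C c * u) ≤ x (C c * u - C c * W u) := hq_le _ _ hdeg
        _ = x (C c * (u - W u)) := by ring_nf
        _ = ‖c‖₊ * q u := by rw [hmul, hext]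
    have hq_smul : ∀ (c : k) (u : Polynomial k), q (C c * u) = ‖c‖₊ * q u := by
      intro c u
      rcases eq_or_ne c 0 with rfl | hc
      · have hx0 : x 0 = 0 := by simpa using hext 0
        have hdeg0 : (0 : Polynomial k).degree < (n : ℕ) := by
          rw [Polynomial.degree_zero]; exact WithBot.bot_lt_coe n
        have h0 : q 0 ≤ x ((0 : Polynomial k) - 0) := hq_le 0 0 hdeg0
        simp only [map_zero, zero_mul, nnnorm_zero]
        refine le_antisymm ?_ (by positivity)
        simpa [hx0] using h0
      · refine le_antisymm (hq_smul_le c u) ?_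
        have h2 := hq_smul_le c⁻¹ (C c * u)
        have : q u ≤ ‖c‖₊⁻¹ * q (C c * u) := by
          have heq : C c⁻¹ * (C c * u) = u := by
            rw [← mul_assoc, ← C_mul, inv_mul_cancel₀ hc, C_1, one_mul]
          rw [heq] at h2
          simpa [nnnorm_inv] using h2
        calc ‖c‖₊ * q u ≤ ‖c‖₊ * (‖c‖₊⁻¹ * q (C c * u)) := by gcongr
          _ = q (C c * u) := by
            rw [← mul_assoc, mul_inv_cancel₀ (by simpa using hc), one_mul]
    -- the outer minimization over the coefficient of X^n
    set G : k → ℝ≥0 := fun a => q (Q - C a * X ^ n) with hG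
    set s : ℝ≥0 := q (X ^ n : Polynomial k) with hs
    have hG1 : ∀ a b : k, G b ≤ max (G a) (‖a - b‖₊ * s) := by
      intro a b
      have heq : Q - C b * X ^ n = (Q - C a * X ^ n) + C (a - b) * X ^ n := by
        rw [C_sub]; ring
      calc G b = q ((Q - C a * X ^ n) + C (a - b) * X ^ n) := by rw [hG]; simp only; rw [heq]
        _ ≤ max (G a) (q (C (a - b) * X ^ n)) := hq_add _ _
        _ = max (G a) (‖a - b‖₊ * s) := by rw [hq_smul]
    have hG2 : ∀ a b : k, ‖a - b‖₊ * s ≤ max (G a) (G b) := by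
      intro a b
      have heq : C (a - b) * X ^ n = (Q - C b * X ^ n) + (-1 : Polynomial k) * (Q - C a * X ^ n) := by
        rw [C_sub]; ring
      calc ‖a - b‖₊ * s = q (C (a - b) * X ^ n) := (hq_smul _ _).symm
        _ = q ((Q - C b * X ^ n) + C (-1 : k) * (Q - C a * X ^ n)) := by
            rw [heq]; norm_num
        _ ≤ max (G b) (q (C (-1:k) * (Q - C a * X ^ n))) := hq_add _ _
        _ = max (G b) (G a) := by rw [hq_smul]; simp; rfl
        _ = max (G a) (G b) := max_comm _ _
    have hmin : ∃ a₀ : k, ∀ a : k, G a₀ ≤ G a := by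
      rcases eq_or_lt_of_le (by positivity : (0:ℝ≥0) ≤ s) with hs0 | hs0
      · refine ⟨0, fun a => ?_⟩
        have := hG1 a 0
        rw [← hs0, mul_zero, max_eq_left (by positivity : (0:ℝ≥0) ≤ G a)] at this
        exact this
      · exact chain_min hk G s hs0 hG1 hG2
    obtain ⟨a₀, ha₀⟩ := hmin
    refine ⟨C a₀ * X ^ n + W (Q - C a₀ * X ^ n), ?_, ?_⟩
    · refine lt_of_le_of_lt (degree_add_le _ _) (max_lt ?_ ?_)
      · calc (C a₀ * X ^ n).degree ≤ (C a₀).degree + (X ^ n : Polynomial k).degree :=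
              degree_mul_le _ _
          _ ≤ 0 + n := by gcongr; exacts [degree_C_le, degree_X_pow_le n]
          _ < (n + 1 : ℕ) := by
            rw [zero_add]; exact_mod_cast Nat.lt_succ_self n
      · exact lt_of_lt_of_le (hWdeg _) (by exact_mod_cast Nat.le_succ n)
    · intro P hP
      set a : k := P.coeff n with ha
      set P' : Polynomial k := P - C a * X ^ n with hP'
      have hP'deg : P'.degree < (n : ℕ) := by
        rw [degree_lt_iff_coeff_zero]
        intro m hm
        rw [hP', coeff_sub, coeff_C_mul, coeff_X_pow]
        rcases eq_or_lt_of_le hm with rfl | hlt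
        · simp [ha]
        · have : P.coeff m = 0 := by
            rw [degree_lt_iff_coeff_zero] at hP
            exact hP m hlt
          simp [this, Nat.ne_of_gt hlt]
      have step1 : x (Q - (C a₀ * X ^ n + W (Q - C a₀ * X ^ n))) = G a₀ := by
        rw [hG]; simp only [hq]
        congr 1
        ring
      have step2 : G a ≤ x (Q - P) := by
        have heq : Q - P = (Q - C a * X ^ n) - P' := by rw [hP']; ring
        rw [heq]
        exact hq_le _ _ hP'deg
      rw [step1]
      exact le_trans (ha₀ a) step2

/-- Over a spherically complete non-Archimedean valued field `k`,
for every multiplicative non-Archimedean seminorm `x` on `k[T]` extending the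
absolute value of `k` and every `d ≥ 0`, the infimum of `x R` over monic `R`
of degree `d + 1` (i.e. `R = T^(d+1) - P` with `deg P ≤ d`) is attained. -/
theorem exists_minimal_monic
    {k : Type*} [NormedField k] [IsUltrametricDist k]
    (hk : SphericallyComplete k)
    (x : Polynomial k → ℝ≥0)
    (hmul : ∀ P Q : Polynomial k, x (P * Q) = x P * x Q)
    (hultra : ∀ P Q : Polynomial k, x (P + Q) ≤ max (x P) (x Q))
    (hext : ∀ c : k, x (Polynomial.C c) = ‖c‖₊)
    (d : ℕ) :
    ∃ P₀ : Polynomial k, P₀.degree ≤ d ∧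
      ∀ P : Polynomial k, P.degree ≤ d →
        x (X ^ (d + 1) - P₀) ≤ x (X ^ (d + 1) - P) := by
  have key : ∀ P : Polynomial k, P.degree ≤ (d : ℕ) ↔ P.degree < ((d + 1 : ℕ) : WithBot ℕ) := by
    intro P
    rw [degree_le_iff_coeff_zero, degree_lt_iff_coeff_zero]
    constructor
    · intro h m hm; exact h m (by exact_mod_cast hm)
    · intro h m hm; exact h m (by exact_mod_cast hm)
  obtain ⟨P₀, hdeg, hmin⟩ := exists_min_degree_lt hk x hmul hultra hext (d + 1) (X ^ (d + 1))
  exact ⟨P₀, (key P₀).mpr hdeg, fun P hP => hmin P ((key P).mp hP)⟩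
end

section
/- Let x be a multiplicative non-Archimedean seminorm on k[T] extending |·| on k, with k spherically complete. For every d ≥ 0 there exist a monic polynomial R₀ of degree d+1 and r = |R₀(x)| ≥ 0 such that: (a) r ≤ |R(x)| for every monic R of degree d+1, and (b) defining y : k[T] → ℝ≥0 on monic degree-(d+1) polynomials by y(R) = max(r, |(R - R₀)(x)|), one has y(R) = |R(x)| for all monic R of degree d+1. In particular, the values |R(x)| for all monic R of degree d+1 are determined by r together with the restriction of x to polynomials of degree ≤ d. -/
open Polynomial NNReal

set_option linter.unusedSectionVars false

section AuxNoSeminorm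

variable {k : Type*} [NormedField k]

lemma degree_C_mul_le' (a : k) (p : Polynomial k) :
    (C a * p).degree ≤ p.degree := by
  rw [← smul_eq_C_mul]; exact degree_smul_le a p

/-- Any polynomial of degree `< n` is a combination of given monic polynomials of
degrees `0, 1, ..., n - 1`. -/
lemma xa_repr :
    ∀ (n : ℕ) (Q : ℕ → Polynomial k),
      (∀ j, j < n → (Q j).Monic) → (∀ j, j < n → (Q j).degree = j) →
      ∀ S : Polynomial k, S.degree < (n : WithBot ℕ) →
        ∃ c : ℕ → k, S = ∑ j ∈ Finset.range n, C (c j) * Q j := by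
  intro n
  induction n with
  | zero =>
    intro Q _ _ S hS
    refine ⟨0, ?_⟩
    have hS0 : S = 0 := by
      by_contra h
      exact absurd (zero_le_degree_iff.mpr h) (not_le.mpr (by simpa using hS))
    simp [hS0]
  | succ n ih =>
    intro Q hM hD S hS
    have hlt : ∀ j, j < n → j < n + 1 := fun j hj => hj.trans (Nat.lt_succ_self n)
    set t := S.coeff n with htdef
    have hQn : (Q n).coeff n = 1 := by
      have hm := hM n (Nat.lt_succ_self n)
      have h1 := hm.coeff_natDegree
      rwa [natDegree_eq_of_degree_eq_some (hD n (Nat.lt_succ_self n))] at h1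
    have hS' : (S - C t * Q n).degree < (n : WithBot ℕ) := by
      rw [degree_lt_iff_coeff_zero]
      intro m hm
      rcases eq_or_lt_of_le hm with rfl | hm'
      · simp [coeff_sub, coeff_C_mul, hQn, htdef]
      · have h1 : S.coeff m = 0 := by
          apply coeff_eq_zero_of_degree_lt
          exact hS.trans_le (WithBot.coe_le_coe.mpr hm')
        have h2 : (Q n).coeff m = 0 := by
          apply coeff_eq_zero_of_degree_lt
          rw [hD n (Nat.lt_succ_self n)]
          exact WithBot.coe_lt_coe.mpr hm'
        simp [coeff_sub, coeff_C_mul, h1, h2]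
    obtain ⟨c, hc⟩ := ih Q (fun j hj => hM j (hlt j hj)) (fun j hj => hD j (hlt j hj)) _ hS'
    refine ⟨Function.update c n t, ?_⟩
    rw [Finset.sum_range_succ, Function.update_self]
    have hcong : ∑ j ∈ Finset.range n, C (Function.update c n t j) * Q j
        = ∑ j ∈ Finset.range n, C (c j) * Q j := by
      refine Finset.sum_congr rfl fun j hj => ?_
      rw [Function.update_of_ne (Finset.mem_range.mp hj).ne]
    rw [hcong, ← hc]
    ring

end AuxNoSeminorm

section Aux

variable {k : Type*} [NormedField k] [IsUltrametricDist k] {x : Polynomial k → ℝ≥0}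

lemma xa_zero (hext : ∀ c : k, x (Polynomial.C c) = ‖c‖₊) : x 0 = 0 := by
  simpa using hext 0

lemma xa_C_mul (hmul : ∀ P Q : Polynomial k, x (P * Q) = x P * x Q)
    (hext : ∀ c : k, x (Polynomial.C c) = ‖c‖₊) (c : k) (P : Polynomial k) :
    x (C c * P) = ‖c‖₊ * x P := by
  rw [hmul, hext]

lemma xa_neg (hmul : ∀ P Q : Polynomial k, x (P * Q) = x P * x Q)
    (hext : ∀ c : k, x (Polynomial.C c) = ‖c‖₊) (P : Polynomial k) : x (-P) = x P := by
  have h : -P = C (-1 : k) * P := by simp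
  rw [h, xa_C_mul hmul hext]; simp

/-- The ultrametric equality: if `x B < x A` then `x (A + B) = x A`. -/
lemma xa_add_eq_left (hmul : ∀ P Q : Polynomial k, x (P * Q) = x P * x Q)
    (hultra : ∀ P Q : Polynomial k, x (P + Q) ≤ max (x P) (x Q))
    (hext : ∀ c : k, x (Polynomial.C c) = ‖c‖₊) {A B : Polynomial k} (h : x B < x A) :
    x (A + B) = x A := by
  refine le_antisymm ((hultra A B).trans_eq (max_eq_left h.le)) ?_
  have h2 := hultra (A + B) (-B)
  rw [add_neg_cancel_right, xa_neg hmul hext] at h2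
  rcases le_max_iff.mp h2 with h3 | h3
  · exact h3
  · exact absurd h3 (not_le.mpr h)

lemma xa_sub_le (hmul : ∀ P Q : Polynomial k, x (P * Q) = x P * x Q)
    (hultra : ∀ P Q : Polynomial k, x (P + Q) ≤ max (x P) (x Q))
    (hext : ∀ c : k, x (Polynomial.C c) = ‖c‖₊) (A B : Polynomial k) :
    x (A - B) ≤ max (x A) (x B) := by
  have h := hultra A (-B)
  rw [xa_neg hmul hext, ← sub_eq_add_neg] at h
  exact h

/-- Orthogonality: if `Q j` is a monic polynomial of degree `j` with minimal `x`-value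
among monic polynomials of degree `j` (for each `j < n`), then `x` of a linear
combination of the `Q j` is the maximum of the `x`-values of the summands. -/
lemma xa_orth (hmul : ∀ P Q : Polynomial k, x (P * Q) = x P * x Q)
    (hultra : ∀ P Q : Polynomial k, x (P + Q) ≤ max (x P) (x Q))
    (hext : ∀ c : k, x (Polynomial.C c) = ‖c‖₊) :
    ∀ (n : ℕ) (Q : ℕ → Polynomial k),
      (∀ j, j < n → (Q j).Monic) → (∀ j, j < n → (Q j).degree = j) →
      (∀ j, j < n → ∀ R : Polynomial k, R.Monic → R.degree = j → x (Q j) ≤ x R) →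
      ∀ c : ℕ → k,
        x (∑ j ∈ Finset.range n, C (c j) * Q j)
          = (Finset.range n).sup fun j => ‖c j‖₊ * x (Q j) := by
  intro n
  induction n with
  | zero => intro Q _ _ _ c; simpa using xa_zero hext
  | succ n ih =>
    intro Q hM hD hmin c
    have hlt : ∀ j, j < n → j < n + 1 := fun j hj => hj.trans (Nat.lt_succ_self n)
    have hP' := ih Q (fun j hj => hM j (hlt j hj)) (fun j hj => hD j (hlt j hj))
      (fun j hj => hmin j (hlt j hj)) c
    set P' : Polynomial k := ∑ j ∈ Finset.range n, C (c j) * Q j with hP'def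
    set M' : ℝ≥0 := (Finset.range n).sup (fun j => ‖c j‖₊ * x (Q j)) with hM'def
    rw [Finset.sum_range_succ, Finset.range_add_one, Finset.sup_insert, ← hP'def, ← hM'def]
    set t : ℝ≥0 := ‖c n‖₊ * x (Q n) with htdef
    have hxt : x (C (c n) * Q n) = t := xa_C_mul hmul hext _ _
    rcases lt_or_ge t M' with h | h
    · rw [max_eq_right h.le]
      have hlt2 : x (C (c n) * Q n) < x P' := by rw [hxt, hP']; exact h
      rw [xa_add_eq_left hmul hultra hext hlt2, hP']
    · rw [max_eq_left h]
      refine le_antisymm ?_ ?_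
      · have h1 := hultra P' (C (c n) * Q n)
        rw [hxt, hP'] at h1
        exact h1.trans (max_le h le_rfl)
      · rcases eq_or_ne t 0 with ht0 | ht0
        · rw [ht0]; exact zero_le
        · have hc : c n ≠ 0 := by
            intro h0; apply ht0; rw [htdef, h0]; simp
          have hPdeg : P'.degree < (n : WithBot ℕ) := by
            refine (degree_sum_le _ _).trans_lt ?_
            refine (Finset.sup_lt_iff (WithBot.bot_lt_coe n)).mpr fun j hj => ?_
            refine (degree_C_mul_le' _ _).trans_lt ?_
            rw [hD j (hlt j (Finset.mem_range.mp hj))]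
            exact WithBot.coe_lt_coe.mpr (Finset.mem_range.mp hj)
          have hdegsmul : (C (c n)⁻¹ * P').degree < (Q n).degree := by
            rw [hD n (Nat.lt_succ_self n)]
            exact (degree_C_mul_le' _ _).trans_lt hPdeg
          have hRmonic : (Q n + C (c n)⁻¹ * P').Monic :=
            (hM n (Nat.lt_succ_self n)).add_of_left hdegsmul
          have hRdeg : (Q n + C (c n)⁻¹ * P').degree = (n : WithBot ℕ) := by
            rw [degree_add_eq_left_of_degree_lt hdegsmul, hD n (Nat.lt_succ_self n)]
          have hmin' := hmin n (Nat.lt_succ_self n) _ hRmonic hRdeg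
          have hrw : Q n + C (c n)⁻¹ * P' = C (c n)⁻¹ * (P' + C (c n) * Q n) := by
            rw [mul_add, ← mul_assoc, ← C_mul, inv_mul_cancel₀ hc]
            simp [add_comm]
          rw [hrw, xa_C_mul hmul hext] at hmin'
          rw [htdef]
          calc ‖c n‖₊ * x (Q n)
              ≤ ‖c n‖₊ * (‖(c n)⁻¹‖₊ * x (P' + C (c n) * Q n)) := mul_le_mul_right hmin' _
            _ = x (P' + C (c n) * Q n) := by
                rw [← mul_assoc, ← nnnorm_mul, mul_inv_cancel₀ hc, nnnorm_one, one_mul]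

/-- Existence of a monic polynomial of degree `n` with minimal `x`-value among all
monic polynomials of degree `n`, via spherical completeness of `k`. -/
lemma xa_exists_min (hk : SphericallyComplete k)
    (hmul : ∀ P Q : Polynomial k, x (P * Q) = x P * x Q)
    (hultra : ∀ P Q : Polynomial k, x (P + Q) ≤ max (x P) (x Q))
    (hext : ∀ c : k, x (Polynomial.C c) = ‖c‖₊) :
    ∀ n : ℕ, ∃ Q₀ : Polynomial k, Q₀.Monic ∧ Q₀.degree = (n : WithBot ℕ) ∧
      ∀ R : Polynomial k, R.Monic → R.degree = (n : WithBot ℕ) → x Q₀ ≤ x R := by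
  intro n
  induction n using Nat.strong_induction_on with
  | _ n ih =>
  classical
  set Q : ℕ → Polynomial k := fun j => if h : j < n then (ih j h).choose else 1 with hQdef
  have hM : ∀ j, j < n → (Q j).Monic := fun j hj => by
    simp only [hQdef, dif_pos hj]; exact (ih j hj).choose_spec.1
  have hD : ∀ j, j < n → (Q j).degree = j := fun j hj => by
    simp only [hQdef, dif_pos hj]; exact (ih j hj).choose_spec.2.1
  have hmin : ∀ j, j < n → ∀ R : Polynomial k, R.Monic → R.degree = j → x (Q j) ≤ x R :=
    fun j hj => by
      simp only [hQdef, dif_pos hj]; exact (ih j hj).choose_spec.2.2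
  set Rp : (ℕ → k) → Polynomial k :=
    fun c => X ^ n + ∑ j ∈ Finset.range n, C (c j) * Q j with hRpdef
  have hsumdeg : ∀ c : ℕ → k,
      (∑ j ∈ Finset.range n, C (c j) * Q j).degree < (n : WithBot ℕ) := by
    intro c
    refine (degree_sum_le _ _).trans_lt ?_
    refine (Finset.sup_lt_iff (WithBot.bot_lt_coe n)).mpr fun j hj => ?_
    refine (degree_C_mul_le' _ _).trans_lt ?_
    rw [hD j (Finset.mem_range.mp hj)]
    exact WithBot.coe_lt_coe.mpr (Finset.mem_range.mp hj)
  have hRpmonic : ∀ c, (Rp c).Monic := fun c => by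
    simp only [hRpdef]
    exact (monic_X_pow n).add_of_left (by rw [degree_X_pow]; exact hsumdeg c)
  have hRpdeg : ∀ c, (Rp c).degree = (n : WithBot ℕ) := fun c => by
    simp only [hRpdef]
    rw [degree_add_eq_left_of_degree_lt (by rw [degree_X_pow]; exact hsumdeg c), degree_X_pow]
  have hdiff : ∀ a b : ℕ → k,
      Rp a - Rp b = ∑ j ∈ Finset.range n, C (a j - b j) * Q j := by
    intro a b
    simp only [hRpdef]
    rw [add_sub_add_left_eq_sub, ← Finset.sum_sub_distrib]
    refine Finset.sum_congr rfl fun j _ => ?_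
    rw [← sub_mul, ← C_sub]
  have hxdiff : ∀ a b : ℕ → k,
      x (Rp a - Rp b) = (Finset.range n).sup fun j => ‖a j - b j‖₊ * x (Q j) := by
    intro a b
    rw [hdiff a b]
    exact xa_orth hmul hultra hext n Q hM hD hmin _
  set rstar : ℝ≥0 := ⨅ c : ℕ → k, x (Rp c) with hrstar
  set ι : Type := {q : ℝ≥0 // rstar < q} with hι
  have hne : Nonempty ι := ⟨⟨rstar + 1, lt_add_of_pos_right _ one_pos⟩⟩
  have hsel : ∀ q : ι, ∃ c : ℕ → k, x (Rp c) < q.1 := by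
    intro q
    by_contra h
    push_neg at h
    exact absurd (le_ciInf h : q.1 ≤ rstar) (not_le.mpr q.2)
  choose cf hcf using hsel
  have hkey : ∀ (i i' : ι) (j : ℕ), j < n →
      ‖cf i j - cf i' j‖₊ * x (Q j) ≤ max (x (Rp (cf i))) (x (Rp (cf i'))) := by
    intro i i' j hj
    have h1 : ‖cf i j - cf i' j‖₊ * x (Q j)
        ≤ (Finset.range n).sup fun j => ‖cf i j - cf i' j‖₊ * x (Q j) :=
      Finset.le_sup (f := fun j => ‖cf i j - cf i' j‖₊ * x (Q j)) (Finset.mem_range.mpr hj)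
    rw [← hxdiff] at h1
    exact h1.trans (xa_sub_le hmul hultra hext _ _)
  have hlim : ∀ j, j < n → ∃ a : k, ∀ i : ι, ‖a - cf i j‖₊ * x (Q j) ≤ x (Rp (cf i)) := by
    intro j hj
    rcases eq_or_ne (x (Q j)) 0 with hw | hw
    · exact ⟨0, fun i => by rw [hw, mul_zero]; exact zero_le⟩
    · have hconv : ∀ (u : k) (b : ℝ≥0),
          ‖u‖₊ * x (Q j) ≤ b ↔ ‖u‖ ≤ ((b / x (Q j) : ℝ≥0) : ℝ) := by
        intro u b
        rw [← le_div_iff₀ hw.bot_lt, ← NNReal.coe_le_coe, coe_nnnorm]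
      have hchain : ∀ i i' : ι, x (Rp (cf i)) ≤ x (Rp (cf i')) →
          Metric.closedBall (cf i j) ((x (Rp (cf i)) / x (Q j) : ℝ≥0) : ℝ) ⊆
            Metric.closedBall (cf i' j) ((x (Rp (cf i')) / x (Q j) : ℝ≥0) : ℝ) := by
        intro i i' hle z hz
        rw [Metric.mem_closedBall] at hz ⊢
        have hd : dist (cf i j) (cf i' j) ≤ ((x (Rp (cf i')) / x (Q j) : ℝ≥0) : ℝ) := by
          rw [dist_eq_norm, ← hconv _ _]
          exact (hkey i i' j hj).trans (max_le hle le_rfl)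
        refine (IsUltrametricDist.dist_triangle_max z (cf i j) (cf i' j)).trans
          (max_le (hz.trans ?_) hd)
        rw [NNReal.coe_le_coe, div_eq_mul_inv, div_eq_mul_inv]
        exact mul_le_mul_left hle _
      have hball := hk ι hne (fun i => cf i j)
        (fun i => ((x (Rp (cf i)) / x (Q j) : ℝ≥0) : ℝ))
        (fun i => (x (Rp (cf i)) / x (Q j) : ℝ≥0).coe_nonneg)
        (fun i i' => by
          rcases le_total (x (Rp (cf i))) (x (Rp (cf i'))) with hle | hle
          · exact Or.inl (hchain i i' hle)
          · exact Or.inr (hchain i' i hle))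
      obtain ⟨a, ha⟩ := hball
      refine ⟨a, fun i => ?_⟩
      have hmem := Set.mem_iInter.mp ha i
      rw [Metric.mem_closedBall, dist_eq_norm] at hmem
      exact (hconv _ _).mpr hmem
  choose af haf using hlim
  set A : ℕ → k := fun j => if h : j < n then af j h else 0 with hA
  have hQ0le : ∀ i : ι, x (Rp A) ≤ x (Rp (cf i)) := by
    intro i
    have h1 : x (Rp A - Rp (cf i)) ≤ x (Rp (cf i)) := by
      rw [hxdiff]
      refine Finset.sup_le fun j hj => ?_
      have hj' := Finset.mem_range.mp hj
      have hAj : A j = af j hj' := by simp only [hA, dif_pos hj']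
      rw [hAj]
      exact haf j hj' i
    have h3 := hultra (Rp A - Rp (cf i)) (Rp (cf i))
    have h4 : Rp A - Rp (cf i) + Rp (cf i) = Rp A := by ring
    rw [h4] at h3
    exact h3.trans (max_le h1 le_rfl)
  have hQ0 : x (Rp A) ≤ rstar := by
    refine le_of_forall_gt_imp_ge_of_dense fun q hq => ?_
    exact (hQ0le ⟨q, hq⟩).trans (hcf ⟨q, hq⟩).le
  refine ⟨Rp A, hRpmonic A, hRpdeg A, ?_⟩
  intro R hRm hRd
  have hsub : (R - X ^ n).degree < (n : WithBot ℕ) := by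
    have h5 := degree_sub_lt (p := R) (q := (X : Polynomial k) ^ n)
      (by rw [hRd, degree_X_pow]) hRm.ne_zero
      (by rw [hRm.leadingCoeff, leadingCoeff_X_pow])
    rwa [hRd] at h5
  obtain ⟨c, hc⟩ := xa_repr n Q hM hD (R - X ^ n) hsub
  have hReq : R = Rp c := by
    simp only [hRpdef]
    rw [← hc]
    ring
  rw [hReq]
  exact hQ0.trans (ciInf_le (OrderBot.bddBelow _) c)

end Aux

/-- Over a spherically complete non-Archimedean valued field `k`,
for every multiplicative non-Archimedean seminorm `x` on `k[T]` extending the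
absolute value of `k` and every `d`, there is a monic polynomial
`R₀ = T^(d+1) - P₀` of degree `d+1` with `r = x R₀` such that (a) `r ≤ x R`
for every monic `R` of degree `d+1`, and (b) `x R = max r (x (R - R₀))` for
every monic `R` of degree `d+1`; so the values of `x` on monic polynomials of
degree `d+1` are determined by `r` and the values of `x` in degree `≤ d`. -/
theorem approx_step
    {k : Type*} [NormedField k] [IsUltrametricDist k]
    (hk : SphericallyComplete k)
    (x : Polynomial k → ℝ≥0)
    (hmul : ∀ P Q : Polynomial k, x (P * Q) = x P * x Q)
    (hultra : ∀ P Q : Polynomial k, x (P + Q) ≤ max (x P) (x Q))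
    (hext : ∀ c : k, x (Polynomial.C c) = ‖c‖₊)
    (d : ℕ) :
    ∃ P₀ : Polynomial k, P₀.degree ≤ d ∧
      (∀ P : Polynomial k, P.degree ≤ d →
        x (X ^ (d + 1) - P₀) ≤ x (X ^ (d + 1) - P)) ∧
      (∀ P : Polynomial k, P.degree ≤ d →
        x (X ^ (d + 1) - P) =
          max (x (X ^ (d + 1) - P₀))
            (x ((X ^ (d + 1) - P) - (X ^ (d + 1) - P₀)))) := by
  obtain ⟨Q₀, hQm, hQd, hQmin⟩ := xa_exists_min hk hmul hultra hext (d + 1)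
  have hdd1 : (d : WithBot ℕ) < ((d + 1 : ℕ) : WithBot ℕ) :=
    WithBot.coe_lt_coe.mpr (Nat.lt_succ_self d)
  -- auxiliary facts about monic polynomials `X ^ (d + 1) - P`
  have hmonicP : ∀ P : Polynomial k, P.degree ≤ d → (X ^ (d + 1) - P).Monic := by
    intro P hP
    exact monic_X_pow_sub (hP.trans_lt hdd1)
  have hdegP : ∀ P : Polynomial k, P.degree ≤ d →
      (X ^ (d + 1) - P).degree = ((d + 1 : ℕ) : WithBot ℕ) := by
    intro P hP
    rw [degree_sub_eq_left_of_degree_lt, degree_X_pow]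
    rw [degree_X_pow]
    exact hP.trans_lt hdd1
  refine ⟨X ^ (d + 1) - Q₀, ?_, ?_, ?_⟩
  · -- degree bound
    have h1 : ((X : Polynomial k) ^ (d + 1) - Q₀).degree < ((d + 1 : ℕ) : WithBot ℕ) := by
      have h2 := degree_sub_lt (p := (X : Polynomial k) ^ (d + 1)) (q := Q₀)
        (by rw [degree_X_pow, hQd]) (monic_X_pow (d + 1)).ne_zero
        (by rw [leadingCoeff_X_pow, hQm.leadingCoeff])
      rwa [degree_X_pow] at h2
    rw [degree_le_iff_coeff_zero]
    intro m hm
    rw [degree_lt_iff_coeff_zero] at h1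
    exact h1 m (WithBot.coe_lt_coe.mp hm)
  · -- minimality
    intro P hP
    rw [sub_sub_cancel]
    exact hQmin _ (hmonicP P hP) (hdegP P hP)
  · -- the max formula
    intro P hP
    have hB : (X ^ (d + 1) - P) - (X ^ (d + 1) - (X ^ (d + 1) - Q₀))
        = (X ^ (d + 1) - Q₀) - P := by ring
    have hsum : X ^ (d + 1) - P = Q₀ + ((X ^ (d + 1) - Q₀) - P) := by ring
    rw [hB, sub_sub_cancel]
    rcases lt_trichotomy (x ((X ^ (d + 1) - Q₀) - P)) (x Q₀) with h | h | h
    · rw [hsum, xa_add_eq_left hmul hultra hext h, max_eq_left h.le]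
    · rw [h, max_self]
      refine le_antisymm ?_ (hQmin _ (hmonicP P hP) (hdegP P hP))
      rw [hsum]
      exact (hultra _ _).trans (by rw [h]; exact max_le le_rfl le_rfl)
    · rw [hsum, add_comm, xa_add_eq_left hmul hultra hext h, max_eq_right h.le]
end

section
/- Let k be a non-Archimedean valued field and x a multiplicative seminorm on k[T] extending |·|. Suppose A is monic of degree d+1 with x(A) < x_d(A), where x_d(A) denotes max(r, x(A - R₀)) for R₀ monic of degree d+1 realizing the minimal value r = x(R₀) among monic degree-(d+1) polynomials, and suppose x and x_d agree on polynomials of degree ≤ d. Then x(R₀) < x_d(R₀); in particular, since x(R₀) is minimal, x(A - R₀) computed via x equals that via x_d, and r < x_d(R₀) = x(A - R₀). -/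
open Polynomial NNReal

/-- Let `x` and `x_d = y` be multiplicative non-Archimedean
seminorms on `k[T]` extending the absolute value of `k` that agree on
polynomials of degree `≤ d`. Let `R₀ = T^(d+1) - P₀` be monic of degree `d+1`
realizing the minimal value `r = x R₀` of `x` among monic polynomials of
degree `d+1`. If `A = T^(d+1) - P_A` is monic of degree `d+1` with
`x A < y A`, then `x R₀ < y R₀`; in particular, `x (A - R₀) = y (A - R₀)`
(both seminorms agreeing in degree `≤ d`) and `r < y R₀`. -/
theorem strict_inequality_step
    {k : Type*} [NormedField k] [IsUltrametricDist k]
    (x y : Polynomial k → ℝ≥0)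
    (hxmul : ∀ P Q : Polynomial k, x (P * Q) = x P * x Q)
    (hxultra : ∀ P Q : Polynomial k, x (P + Q) ≤ max (x P) (x Q))
    (hxext : ∀ c : k, x (Polynomial.C c) = ‖c‖₊)
    (hymul : ∀ P Q : Polynomial k, y (P * Q) = y P * y Q)
    (hyultra : ∀ P Q : Polynomial k, y (P + Q) ≤ max (y P) (y Q))
    (hyext : ∀ c : k, y (Polynomial.C c) = ‖c‖₊)
    (d : ℕ)
    (hagree : ∀ P : Polynomial k, P.degree ≤ d → x P = y P)
    (P₀ : Polynomial k) (hP₀ : P₀.degree ≤ d)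
    (hmin : ∀ P : Polynomial k, P.degree ≤ d →
      x (X ^ (d + 1) - P₀) ≤ x (X ^ (d + 1) - P))
    (PA : Polynomial k) (hPA : PA.degree ≤ d)
    (hA : x (X ^ (d + 1) - PA) < y (X ^ (d + 1) - PA)) :
    x (X ^ (d + 1) - P₀) < y (X ^ (d + 1) - P₀) ∧
      x ((X ^ (d + 1) - PA) - (X ^ (d + 1) - P₀)) =
        y ((X ^ (d + 1) - PA) - (X ^ (d + 1) - P₀)) := by
  have hdiff : (X ^ (d + 1) - PA) - (X ^ (d + 1) - P₀) = P₀ - PA := by ring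
  have hdeg : (P₀ - PA).degree ≤ d := le_trans (degree_sub_le _ _) (max_le hP₀ hPA)
  have hagree' : x ((X ^ (d + 1) - PA) - (X ^ (d + 1) - P₀)) =
      y ((X ^ (d + 1) - PA) - (X ^ (d + 1) - P₀)) := by
    rw [hdiff]; exact hagree _ hdeg
  refine ⟨?_, hagree'⟩
  by_contra h
  push_neg at h
  have hxneg : ∀ P : Polynomial k, x (-P) = x P := by
    intro P
    have : (-P) = Polynomial.C (-1) * P := by simp
    rw [this, hxmul, hxext]
    simp
  -- x R₀ ≤ x A
  have h1 : x (X ^ (d + 1) - P₀) ≤ x (X ^ (d + 1) - PA) := hmin _ hPA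
  -- y (A - R₀) = x (A - R₀) ≤ max (x A) (x R₀) ≤ x A
  have h2 : y ((X ^ (d + 1) - PA) - (X ^ (d + 1) - P₀)) ≤ x (X ^ (d + 1) - PA) := by
    rw [← hagree']
    calc x ((X ^ (d + 1) - PA) - (X ^ (d + 1) - P₀))
        ≤ max (x (X ^ (d + 1) - PA)) (x (-(X ^ (d + 1) - P₀))) := by
          have := hxultra (X ^ (d + 1) - PA) (-(X ^ (d + 1) - P₀))
          simpa [sub_eq_add_neg] using this
      _ ≤ x (X ^ (d + 1) - PA) := by
          rw [hxneg]
          exact max_le le_rfl h1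
  -- y A ≤ max (y R₀) (y (A - R₀)) ≤ x A, contradiction
  have h3 : y (X ^ (d + 1) - PA) ≤ x (X ^ (d + 1) - PA) := by
    have key : (X ^ (d + 1) - PA) =
        (X ^ (d + 1) - P₀) + ((X ^ (d + 1) - PA) - (X ^ (d + 1) - P₀)) := by ring
    calc y (X ^ (d + 1) - PA)
        ≤ max (y (X ^ (d + 1) - P₀)) (y ((X ^ (d + 1) - PA) - (X ^ (d + 1) - P₀))) := by
          conv_lhs => rw [key]
          exact hyultra _ _
      _ ≤ x (X ^ (d + 1) - PA) := max_le (le_trans h h1) h2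
  exact absurd hA (not_lt.mpr h3)
end
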